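/- arXiv:2411.00343 — 2 statements merged into one kernel-verified Lean document; each statement's English description precedes it below -/
import Mathlib

section
/- For any graph G and any distension Ĝ of G, pw(Ĝ) ≤ pw(G) + 2. -/
open SimpleGraph

/-- `H` is isomorphic to a subgraph of `G`. -/
def Contains {α β : Type} (H : SimpleGraph α) (G : SimpleGraph β) : Prop :=
  ∃ f : α ↪ β, ∀ ⦃u v⦄, H.Adj u v → G.Adj (f u) (f v)

/-- The strong product of two graphs. -/
def StrongProd {α β : Type} (G : SimpleGraph α) (H : SimpleGraph β) :
    SimpleGraph (α × β) where
  Adj x y := x ≠ y ∧ (x.1 = y.1 ∨ G.Adj x.1 y.1) ∧ (x.2 = y.2 ∨ H.Adj x.2 y.2)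
  symm := by
    constructor
    rintro x y ⟨h1, h2, h3⟩
    exact ⟨h1.symm, h2.imp Eq.symm SimpleGraph.Adj.symm, h3.imp Eq.symm SimpleGraph.Adj.symm⟩
  loopless := ⟨fun x h => h.1 rfl⟩

/-- `H` is a minor of `G`, witnessed by disjoint connected branch sets. -/
def IsMinorOf {α β : Type} (H : SimpleGraph α) (G : SimpleGraph β) : Prop :=
  ∃ B : α → Set β,
    (∀ a, (G.induce (B a)).Connected) ∧
    (Pairwise fun a b => Disjoint (B a) (B b)) ∧
    (∀ ⦃a b⦄, H.Adj a b → ∃ x ∈ B a, ∃ y ∈ B b, G.Adj x y)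

/-- A graph is planar iff it has no `K₅` minor and no `K₃,₃` minor (Wagner's theorem). -/
def IsPlanar {α : Type} (G : SimpleGraph α) : Prop :=
  ¬ IsMinorOf (completeGraph (Fin 5)) G ∧
  ¬ IsMinorOf (completeBipartiteGraph (Fin 3) (Fin 3)) G

/-- `G` has a tree-decomposition of width at most `k`. -/
def HasTreewidthLE {α : Type} (G : SimpleGraph α) (k : ℕ) : Prop :=
  ∃ (ι : Type) (T : SimpleGraph ι) (B : ι → Set α),
    T.IsTree ∧
    (∀ ⦃u v⦄, G.Adj u v → ∃ i, u ∈ B i ∧ v ∈ B i) ∧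
    (∀ v, (T.induce {i | v ∈ B i}).Connected) ∧
    (∀ i, (B i).Finite ∧ (B i).ncard ≤ k + 1)

/-- `G` has a path-decomposition of width at most `k`. -/
def HasPathwidthLE {α : Type} (G : SimpleGraph α) (k : ℕ) : Prop :=
  ∃ (m : ℕ) (B : Fin m → Set α),
    (∀ ⦃u v⦄, G.Adj u v → ∃ i, u ∈ B i ∧ v ∈ B i) ∧
    (∀ v, ∃ i, v ∈ B i) ∧
    (∀ v (i j l : Fin m), i ≤ j → j ≤ l → v ∈ B i → v ∈ B l → v ∈ B j) ∧
    (∀ i, (B i).Finite ∧ (B i).ncard ≤ k + 1)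

/-- The quotient of `G` by a family of sets of vertices: vertices are the members of `P`,
two parts being adjacent iff some pair of representatives is adjacent in `G`. -/
def QuotientGraph {α : Type} (G : SimpleGraph α) (P : Set (Set α)) :
    SimpleGraph P where
  Adj A B := A ≠ B ∧ ∃ a ∈ (A : Set α), ∃ b ∈ (B : Set α), G.Adj a b
  symm := by
    constructor
    rintro A B ⟨h1, a, ha, b, hb, hab⟩
    exact ⟨h1.symm, b, hb, a, ha, hab.symm⟩
  loopless := ⟨fun A h => h.1 rfl⟩

/-- A partition of the vertices of `G` is a tree-partition if the quotient graph is
contained in a tree. -/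
def IsTreePartition {α : Type} (G : SimpleGraph α) (P : Set (Set α)) : Prop :=
  Setoid.IsPartition P ∧
  ∃ (ι : Type) (T : SimpleGraph ι), T.IsTree ∧ Contains (QuotientGraph G P) T

/-- A matching: a set of edges of `G`, pairwise not sharing a vertex. -/
def IsMatchingSet {α : Type} (G : SimpleGraph α) (M : Set (Sym2 α)) : Prop :=
  M ⊆ G.edgeSet ∧ M.Pairwise fun e f => ∀ v, v ∈ e → v ∉ f

/-- The parts obtained from a matching: matched pairs and singletons of unmatched vertices. -/
def matchingParts {α : Type} (M : Set (Sym2 α)) : Set (Set α) :=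
  {S | (∃ e ∈ M, S = {x | x ∈ e}) ∨ ∃ v, (∀ e ∈ M, v ∉ e) ∧ S = {v}}

/-- The graph `G/M` obtained by contracting each edge of a matching `M`. -/
def ContractMatching {α : Type} (G : SimpleGraph α) (M : Set (Sym2 α)) :
    SimpleGraph (matchingParts M) :=
  QuotientGraph G (matchingParts M)

/-- A graph is a path graph if it is isomorphic to `pathGraph n` for some `n`. -/
def IsPathGraph {α : Type} (G : SimpleGraph α) : Prop :=
  ∃ n : ℕ, Nonempty (G ≃g SimpleGraph.pathGraph n)

/-- A graph in which every cycle is a triangle. -/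
def IsTriangleForest {α : Type} (G : SimpleGraph α) : Prop :=
  ∀ (v : α) (w : G.Walk v v), w.IsCycle → w.length = 3

/-- `G` is `k`-apex: removing at most `k` vertices leaves a planar graph. -/
def IsKApex {α : Type} (G : SimpleGraph α) (k : ℕ) : Prop :=
  ∃ A : Set α, A.ncard ≤ k ∧ IsPlanar (G.induce Aᶜ)

/-- `G` is an apex-forest: removing at most one vertex leaves a forest. -/
def IsApexForest {α : Type} (G : SimpleGraph α) : Prop :=
  ∃ A : Set α, A.ncard ≤ 1 ∧ (G.induce Aᶜ).IsAcyclic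

/-- `G⁺`: the graph `G` together with one new dominant vertex. -/
def AddDominant {α : Type} (G : SimpleGraph α) : SimpleGraph (Option α) where
  Adj x y := match x, y with
    | some a, some b => G.Adj a b
    | some _, none => True
    | none, some _ => True
    | none, none => False
  symm := ⟨by rintro (_|a) (_|b) h <;> simp_all [SimpleGraph.Adj.symm, adj_symm]⟩
  loopless := ⟨by rintro (_|a) h <;> simp_all⟩

/-- `G'` is a distension of `G`: for each edge `vw` of `G`, a non-empty path, complete
to `{v, w}`, is added, with the added paths disjoint from `G` and from each other. -/
def IsDistension {α β : Type} (G : SimpleGraph α) (G' : SimpleGraph β) : Prop :=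
  ∃ (g : α ↪ β) (f : β → Sym2 α),
    (∀ u v : α, G'.Adj (g u) (g v) ↔ G.Adj u v) ∧
    (∀ w : β, w ∉ Set.range g → f w ∈ G.edgeSet) ∧
    (∀ w : β, w ∉ Set.range g → ∀ v : α, (G'.Adj w (g v) ↔ v ∈ f w)) ∧
    (∀ w w' : β, w ∉ Set.range g → w' ∉ Set.range g → G'.Adj w w' → f w = f w') ∧
    (∀ e ∈ G.edgeSet, {w : β | w ∉ Set.range g ∧ f w = e}.Nonempty ∧
      IsPathGraph (G'.induce {w : β | w ∉ Set.range g ∧ f w = e}))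

/-- For any graph `G` and any distension `G'` of `G`, `pw(G') ≤ pw(G) + 2`. -/
theorem stmt15 {α β : Type} [Fintype α] [Fintype β]
    (G : SimpleGraph α) (G' : SimpleGraph β) (h : IsDistension G G')
    (k : ℕ) (hk : HasPathwidthLE G k) : HasPathwidthLE G' (k + 2) := by
  classical
  obtain ⟨m, B, hB1, hB2, hB3, hB4⟩ := hk
  obtain ⟨g, f, hgg, hfE, hadj, hww, hpath⟩ := h
  by_cases hm : m = 0
  · -- degenerate case: no bags, so no vertices at all
    subst hm
    have hα : IsEmpty α := ⟨fun u => by obtain ⟨i, _⟩ := hB2 u; exact i.elim0⟩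
    have hβ : IsEmpty β := by
      constructor
      intro w
      by_cases hw : w ∈ Set.range g
      · obtain ⟨u, _⟩ := hw; exact hα.elim u
      · have he := hfE w hw
        exact (IsEmpty.false (α := Sym2 α) (f w)).elim
    refine ⟨0, fun _ => ∅, ?_, ?_, ?_, ?_⟩
    · intro u v hx; exact hβ.elim u
    · intro v; exact hβ.elim v
    · intro v i j l _ _ _ _; exact hβ.elim v
    · intro i; exact i.elim0
  · haveI : Fintype ↥G.edgeSet := (Set.toFinite G.edgeSet).fintype
    -- the path attached to each edge
    have hpath' : ∀ e : ↥G.edgeSet, ∃ nn : ℕ, 0 < nn ∧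
        Nonempty ((G'.induce {w : β | w ∉ Set.range g ∧ f w = (e : Sym2 α)}) ≃g
          pathGraph nn) := by
      rintro ⟨e, he⟩
      obtain ⟨⟨w0, hw0⟩, nn, ⟨iso0⟩⟩ := hpath e he
      exact ⟨nn, (iso0 ⟨w0, hw0⟩).pos, ⟨iso0⟩⟩
    choose n hn hiso using hpath'
    set iso : (e : ↥G.edgeSet) →
        ((G'.induce {w : β | w ∉ Set.range g ∧ f w = (e : Sym2 α)}) ≃g pathGraph (n e)) :=
      fun e => (hiso e).some with hisodef
    set ω : (e : ↥G.edgeSet) → Fin (n e) → β := fun e j => ((iso e).symm j).1 with hωdef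
    have hωP : ∀ (e : ↥G.edgeSet) (j : Fin (n e)),
        ω e j ∉ Set.range g ∧ f (ω e j) = (e : Sym2 α) := fun e j => ((iso e).symm j).2
    have hωinj : ∀ (e : ↥G.edgeSet) (j j' : Fin (n e)), ω e j = ω e j' → j = j' := by
      intro e j j' hjj
      have h2 : (iso e).symm j = (iso e).symm j' := Subtype.ext hjj
      exact (iso e).symm.toEquiv.injective h2
    have hωadj : ∀ (e : ↥G.edgeSet) (j j' : Fin (n e)),
        G'.Adj (ω e j) (ω e j') ↔ ((j : ℕ) + 1 = (j' : ℕ) ∨ (j' : ℕ) + 1 = (j : ℕ)) := by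
      intro e j j'
      have h1 : G'.Adj (ω e j) (ω e j') ↔
          (G'.induce {w : β | w ∉ Set.range g ∧ f w = (e : Sym2 α)}).Adj
            ((iso e).symm j) ((iso e).symm j') := Iff.rfl
      rw [h1, (iso e).symm.map_adj_iff, pathGraph_adj]
    have hωsurj : ∀ (e : ↥G.edgeSet) (w : β), w ∉ Set.range g → f w = (e : Sym2 α) →
        ∃ j, ω e j = w := by
      intro e w h1 h2
      refine ⟨(iso e) ⟨w, h1, h2⟩, ?_⟩
      show (((iso e).symm ((iso e) ⟨w, h1, h2⟩)) : β) = w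
      rw [RelIso.symm_apply_apply]
    -- hosts
    have hexa : ∀ (u v : α), G.Adj u v → ∃ i : Fin m, ∀ x ∈ s(u,v), x ∈ B i := by
      intro u v hA
      obtain ⟨i, hu, hv⟩ := hB1 hA
      exact ⟨i, fun x hx => by rcases Sym2.mem_iff.mp hx with h | h <;> subst h <;> assumption⟩
    have hex : ∀ e : ↥G.edgeSet, ∃ i : Fin m, ∀ x ∈ (e : Sym2 α), x ∈ B i := by
      rintro ⟨e, he⟩
      revert he
      induction e using Sym2.ind with
      | _ u v => intro he; exact hexa u v (G.mem_edgeSet.mp he)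
    choose host hhost using hex
    -- numerics
    set q := Fintype.card ↥G.edgeSet with hqdef
    set en : ↥G.edgeSet ≃ Fin q := Fintype.equivFin _ with hendef
    set K := Fintype.card β + 1 with hKdef
    have hK0 : 0 < K := by omega
    have hnK : ∀ e, n e ≤ K := by
      intro e
      have hinj : Function.Injective (ω e) := fun j j' hjj => hωinj e j j' hjj
      have h2 := Fintype.card_le_of_injective (ω e) hinj
      rw [Fintype.card_fin] at h2
      omega
    set nS := 1 + q * K with hnSdef
    have hnS0 : 0 < nS := by rw [hnSdef]; omega
    set pos : (e : ↥G.edgeSet) → ℕ → Fin (n e) :=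
      fun e s => ⟨min s (n e - 1), by have := hn e; omega⟩ with hposdef
    have hposval : ∀ (e : ↥G.edgeSet) (s : ℕ), ((pos e s : Fin (n e)) : ℕ) = min s (n e - 1) := by
      intro e s; rw [hposdef]
    set Blk : ↥G.edgeSet → Fin m → ℕ → Set β := fun e i t =>
      if 1 ≤ t ∧ (t - 1) / K = (en e : ℕ) ∧ host e = i then
        {ω e (pos e ((t - 1) % K)), ω e (pos e ((t - 1) % K + 1))}
      else ∅ with hBlk
    set iOf : Fin (m * nS) → Fin m :=
      fun p => ⟨p.1 / nS, (Nat.div_lt_iff_lt_mul hnS0).mpr p.2⟩ with hiOfdef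
    have hio : ∀ p : Fin (m * nS), (iOf p : ℕ) = p.1 / nS := fun p => rfl
    set Bag : Fin (m * nS) → Set β :=
      fun p => (g '' B (iOf p)) ∪ ⋃ e : ↥G.edgeSet, Blk e (iOf p) (p.1 % nS) with hBag
    have hBlkmem : ∀ (e : ↥G.edgeSet) (i : Fin m) (t : ℕ) (x : β),
        x ∈ Blk e i t ↔ ((1 ≤ t ∧ (t - 1) / K = (en e : ℕ) ∧ host e = i) ∧
          (x = ω e (pos e ((t - 1) % K)) ∨ x = ω e (pos e ((t - 1) % K + 1)))) := by
      intro e i t x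
      simp only [hBlk]
      by_cases hc : 1 ≤ t ∧ (t - 1) / K = (en e : ℕ) ∧ host e = i
      · rw [if_pos hc]
        simp [hc, Set.mem_insert_iff]
      · rw [if_neg hc]
        simp [hc]
    have hBagmem : ∀ (p : Fin (m * nS)) (x : β),
        x ∈ Bag p ↔ (x ∈ g '' B (iOf p) ∨ ∃ e, x ∈ Blk e (iOf p) (p.1 % nS)) := by
      intro p x
      simp only [hBag, Set.mem_union, Set.mem_iUnion]
    -- index construction
    have hmklt : ∀ (i : Fin m) (t : ℕ), t < nS → nS * i.1 + t < m * nS := by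
      intro i t ht
      have h1 : nS * (i.1 + 1) = nS * i.1 + nS := by ring
      have h2 : nS * (i.1 + 1) ≤ nS * m := Nat.mul_le_mul_left _ i.2
      have h3 : nS * m = m * nS := Nat.mul_comm _ _
      omega
    set mk : Fin m → (t : ℕ) → t < nS → Fin (m * nS) :=
      fun i t ht => ⟨nS * i.1 + t, hmklt i t ht⟩ with hmkdef
    have hmki : ∀ i t ht, iOf (mk i t ht) = i := by
      intro i t ht
      apply Fin.ext
      show (nS * i.1 + t) / nS = i.1
      rw [Nat.mul_add_div hnS0, Nat.div_eq_of_lt ht]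
      omega
    have hmkt : ∀ i t ht, (mk i t ht).1 % nS = t := by
      intro i t ht
      show (nS * i.1 + t) % nS = t
      rw [Nat.mul_add_mod, Nat.mod_eq_of_lt ht]
    have hTlt : ∀ (e : ↥G.edgeSet) (s : ℕ), s < K → 1 + (en e : ℕ) * K + s < nS := by
      intro e s hs
      have hE : (en e : ℕ) < q := (en e).2
      have h1 : ((en e : ℕ) + 1) * K ≤ q * K := Nat.mul_le_mul_right _ hE
      have h2 : ((en e : ℕ) + 1) * K = (en e : ℕ) * K + K := by ring
      have h3 : nS = 1 + q * K := hnSdef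
      omega
    -- the key bags for the added paths
    have hPmem : ∀ (e : ↥G.edgeSet) (s : ℕ), s < K →
        ∃ p : Fin (m * nS), (∀ u ∈ (e : Sym2 α), g u ∈ Bag p) ∧
          ω e (pos e s) ∈ Bag p ∧ ω e (pos e (s + 1)) ∈ Bag p := by
      intro e s hs
      have ht := hTlt e s hs
      have h1 : 1 + (en e : ℕ) * K + s - 1 = K * (en e : ℕ) + s := by
        rw [Nat.mul_comm ((en e : ℕ)) K]; omega
      have h2 : (1 + (en e : ℕ) * K + s - 1) / K = (en e : ℕ) := by
        rw [h1, Nat.mul_add_div hK0, Nat.div_eq_of_lt hs]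
        omega
      have h3 : (1 + (en e : ℕ) * K + s - 1) % K = s := by
        rw [h1, Nat.mul_add_mod, Nat.mod_eq_of_lt hs]
      refine ⟨mk (host e) (1 + (en e : ℕ) * K + s) ht, ?_, ?_, ?_⟩
      · intro u hu
        rw [hBagmem]
        exact Or.inl ⟨u, by rw [hmki _ _ ht]; exact hhost e u hu, rfl⟩
      · rw [hBagmem]
        refine Or.inr ⟨e, ?_⟩
        rw [hBlkmem, hmkt _ _ ht, hmki _ _ ht]
        exact ⟨⟨by omega, h2, rfl⟩, Or.inl (by rw [h3])⟩
      · rw [hBagmem]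
        refine Or.inr ⟨e, ?_⟩
        rw [hBlkmem, hmkt _ _ ht, hmki _ _ ht]
        exact ⟨⟨by omega, h2, rfl⟩, Or.inr (by rw [h3])⟩
    have hposeq : ∀ (e : ↥G.edgeSet) (j : Fin (n e)), pos e (j : ℕ) = j := by
      intro e j
      apply Fin.ext
      rw [hposval]
      have := j.2
      have := hn e
      omega
    refine ⟨m * nS, Bag, ?_, ?_, ?_, ?_⟩
    · -- edges covered
      intro x y hxy
      by_cases hx : x ∈ Set.range g <;> by_cases hy : y ∈ Set.range g
      · obtain ⟨u, rfl⟩ := hx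
        obtain ⟨v, rfl⟩ := hy
        obtain ⟨i, hu, hv⟩ := hB1 ((hgg u v).mp hxy)
        refine ⟨mk i 0 hnS0, ?_, ?_⟩ <;> rw [hBagmem]
        · exact Or.inl ⟨u, by rw [hmki _ _ hnS0]; exact hu, rfl⟩
        · exact Or.inl ⟨v, by rw [hmki _ _ hnS0]; exact hv, rfl⟩
      · obtain ⟨u, rfl⟩ := hx
        have huf : u ∈ f y := (hadj y hy u).mp hxy.symm
        set e : ↥G.edgeSet := ⟨f y, hfE y hy⟩ with he
        obtain ⟨j, hj⟩ := hωsurj e y hy rfl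
        have hjK : (j : ℕ) < K := lt_of_lt_of_le j.2 (hnK e)
        obtain ⟨p, hp1, hp2, _⟩ := hPmem e (j : ℕ) hjK
        rw [hposeq, hj] at hp2
        exact ⟨p, hp1 u huf, hp2⟩
      · obtain ⟨v, rfl⟩ := hy
        have hvf : v ∈ f x := (hadj x hx v).mp hxy
        set e : ↥G.edgeSet := ⟨f x, hfE x hx⟩ with he
        obtain ⟨j, hj⟩ := hωsurj e x hx rfl
        have hjK : (j : ℕ) < K := lt_of_lt_of_le j.2 (hnK e)
        obtain ⟨p, hp1, hp2, _⟩ := hPmem e (j : ℕ) hjK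
        rw [hposeq, hj] at hp2
        exact ⟨p, hp2, hp1 v hvf⟩
      · have hfxy : f x = f y := hww x y hx hy hxy
        set e : ↥G.edgeSet := ⟨f x, hfE x hx⟩ with he
        obtain ⟨j, hj⟩ := hωsurj e x hx rfl
        obtain ⟨j', hj'⟩ := hωsurj e y hy hfxy.symm
        have hc := (hωadj e j j').mp (by rw [hj, hj']; exact hxy)
        rcases hc with hc | hc
        · have hjK : (j : ℕ) < K := lt_of_lt_of_le j.2 (hnK e)
          obtain ⟨p, _, hp2, hp3⟩ := hPmem e (j : ℕ) hjK
          have hp' : pos e ((j : ℕ) + 1) = j' := by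
            apply Fin.ext
            rw [hposval]
            have := j'.2
            have := hn e
            omega
          rw [hposeq, hj] at hp2
          rw [hp', hj'] at hp3
          exact ⟨p, hp2, hp3⟩
        · have hjK : (j' : ℕ) < K := lt_of_lt_of_le j'.2 (hnK e)
          obtain ⟨p, _, hp2, hp3⟩ := hPmem e (j' : ℕ) hjK
          have hp' : pos e ((j' : ℕ) + 1) = j := by
            apply Fin.ext
            rw [hposval]
            have := j.2
            have := hn e
            omega
          rw [hposeq, hj'] at hp2
          rw [hp', hj] at hp3
          exact ⟨p, hp3, hp2⟩
    · -- vertices covered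
      intro v
      by_cases hv : v ∈ Set.range g
      · obtain ⟨u, rfl⟩ := hv
        obtain ⟨i, hi⟩ := hB2 u
        exact ⟨mk i 0 hnS0, by rw [hBagmem]; exact Or.inl ⟨u, by rw [hmki _ _ hnS0]; exact hi, rfl⟩⟩
      · set e : ↥G.edgeSet := ⟨f v, hfE v hv⟩ with he
        obtain ⟨j, hj⟩ := hωsurj e v hv rfl
        have hjK : (j : ℕ) < K := lt_of_lt_of_le j.2 (hnK e)
        obtain ⟨p, _, hp2, _⟩ := hPmem e (j : ℕ) hjK
        rw [hposeq, hj] at hp2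
        exact ⟨p, hp2⟩
    · -- convexity
      intro v p1 p2 p3 h12 h23 hv1 hv3
      have h12' : p1.1 ≤ p2.1 := Fin.le_def.mp h12
      have h23' : p2.1 ≤ p3.1 := Fin.le_def.mp h23
      by_cases hv : v ∈ Set.range g
      · obtain ⟨u, rfl⟩ := hv
        have hchar : ∀ p : Fin (m * nS), g u ∈ Bag p ↔ u ∈ B (iOf p) := by
          intro p
          rw [hBagmem]
          constructor
          · rintro (⟨u', hu', hgu⟩ | ⟨e, hb⟩)
            · rwa [← g.injective hgu]
            · exfalso
              rw [hBlkmem] at hb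
              rcases hb.2 with hh | hh <;> exact (hωP e _).1 ⟨u, hh⟩
          · intro hu
            exact Or.inl ⟨u, hu, rfl⟩
        rw [hchar] at hv1 hv3 ⊢
        have hi12 : (iOf p1 : ℕ) ≤ (iOf p2 : ℕ) := Nat.div_le_div_right h12'
        have hi23 : (iOf p2 : ℕ) ≤ (iOf p3 : ℕ) := Nat.div_le_div_right h23'
        exact hB3 u (iOf p1) (iOf p2) (iOf p3) (Fin.le_def.mpr hi12) (Fin.le_def.mpr hi23) hv1 hv3
      · set e : ↥G.edgeSet := ⟨f v, hfE v hv⟩ with he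
        obtain ⟨jj0, hjj0⟩ := hωsurj e v hv rfl
        have hchar : ∀ p : Fin (m * nS), v ∈ Bag p ↔
            (iOf p = host e ∧ 1 ≤ p.1 % nS ∧ (p.1 % nS - 1) / K = (en e : ℕ) ∧
              (min ((p.1 % nS - 1) % K) (n e - 1) = (jj0 : ℕ) ∨
               min ((p.1 % nS - 1) % K + 1) (n e - 1) = (jj0 : ℕ))) := by
          intro p
          rw [hBagmem]
          constructor
          · rintro (⟨u, hu, hgu⟩ | ⟨e', hb⟩)
            · exact absurd ⟨u, hgu⟩ hv
            · rw [hBlkmem] at hb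
              obtain ⟨⟨ht1, ht2, ht3⟩, hxx⟩ := hb
              have hfv : f v = (e' : Sym2 α) := by
                rcases hxx with hh | hh <;> rw [hh] <;> exact (hωP e' _).2
              have hee : e' = e := Subtype.ext hfv.symm
              subst hee
              refine ⟨ht3.symm ▸ rfl, ht1, ht2, ?_⟩
              rcases hxx with hh | hh
              · left
                have h2 := hωinj e _ _ (hh.symm.trans hjj0.symm)
                rw [← hposval]
                exact congrArg Fin.val h2
              · right
                have h2 := hωinj e _ _ (hh.symm.trans hjj0.symm)
                rw [← hposval]
                exact congrArg Fin.val h2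
          · rintro ⟨hi, ht1, ht2, hxx⟩
            refine Or.inr ⟨e, ?_⟩
            rw [hBlkmem]
            refine ⟨⟨ht1, ht2, hi.symm⟩, ?_⟩
            rcases hxx with hh | hh
            · have h2 : pos e ((p.1 % nS - 1) % K) = jj0 := Fin.ext (by rw [hposval]; exact hh)
              left; rw [← hjj0, h2]
            · have h2 : pos e ((p.1 % nS - 1) % K + 1) = jj0 := Fin.ext (by rw [hposval]; exact hh)
              right; rw [← hjj0, h2]
        rw [hchar] at hv1 hv3 ⊢
        obtain ⟨hi1, ht1a, ht1b, hs1⟩ := hv1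
        obtain ⟨hi3, ht3a, ht3b, hs3⟩ := hv3
        have hi1' : p1.1 / nS = (host e : ℕ) := by rw [← hio]; exact congrArg Fin.val hi1
        have hi3' : p3.1 / nS = (host e : ℕ) := by rw [← hio]; exact congrArg Fin.val hi3
        have hio2 : p2.1 / nS = (host e : ℕ) := by
          have a1 : p1.1 / nS ≤ p2.1 / nS := Nat.div_le_div_right h12'
          have a2 : p2.1 / nS ≤ p3.1 / nS := Nat.div_le_div_right h23'
          omega
        have hi2 : iOf p2 = host e := Fin.ext (by rw [hio]; exact hio2)
        have hd1 : nS * (p1.1 / nS) + p1.1 % nS = p1.1 := Nat.div_add_mod _ _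
        have hd2 : nS * (p2.1 / nS) + p2.1 % nS = p2.1 := Nat.div_add_mod _ _
        have hd3 : nS * (p3.1 / nS) + p3.1 % nS = p3.1 := Nat.div_add_mod _ _
        have hc12 : nS * (p1.1 / nS) = nS * (p2.1 / nS) := by rw [hi1', hio2]
        have hc23 : nS * (p2.1 / nS) = nS * (p3.1 / nS) := by rw [hio2, hi3']
        have htle12 : p1.1 % nS ≤ p2.1 % nS := by omega
        have htle23 : p2.1 % nS ≤ p3.1 % nS := by omega
        have ht2a : 1 ≤ p2.1 % nS := le_trans ht1a htle12
        have hE12 : (p1.1 % nS - 1) / K ≤ (p2.1 % nS - 1) / K :=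
          Nat.div_le_div_right (by omega)
        have hE23 : (p2.1 % nS - 1) / K ≤ (p3.1 % nS - 1) / K :=
          Nat.div_le_div_right (by omega)
        have ht2b : (p2.1 % nS - 1) / K = (en e : ℕ) := by omega
        have hu1 : K * ((p1.1 % nS - 1) / K) + (p1.1 % nS - 1) % K = p1.1 % nS - 1 :=
          Nat.div_add_mod _ _
        have hu2 : K * ((p2.1 % nS - 1) / K) + (p2.1 % nS - 1) % K = p2.1 % nS - 1 :=
          Nat.div_add_mod _ _
        have hu3 : K * ((p3.1 % nS - 1) / K) + (p3.1 % nS - 1) % K = p3.1 % nS - 1 :=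
          Nat.div_add_mod _ _
        have hw12 : K * ((p1.1 % nS - 1) / K) = K * ((p2.1 % nS - 1) / K) := by
          rw [ht1b, ht2b]
        have hw23 : K * ((p2.1 % nS - 1) / K) = K * ((p3.1 % nS - 1) / K) := by
          rw [ht2b, ht3b]
        have hs12 : (p1.1 % nS - 1) % K ≤ (p2.1 % nS - 1) % K := by omega
        have hs23 : (p2.1 % nS - 1) % K ≤ (p3.1 % nS - 1) % K := by omega
        refine ⟨hi2, ht2a, ht2b, ?_⟩
        have hje := jj0.2
        have hne := hn e
        omega
    · -- sizes
      intro p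
      refine ⟨Set.toFinite _, ?_⟩
      have h1 : (Bag p).ncard ≤ (g '' B (iOf p)).ncard +
          (⋃ e : ↥G.edgeSet, Blk e (iOf p) (p.1 % nS)).ncard := by
        simp only [hBag]
        exact Set.ncard_union_le _ _
      have h2 : (g '' B (iOf p)).ncard ≤ k + 1 := by
        rw [Set.ncard_image_of_injective _ g.injective]
        exact (hB4 (iOf p)).2
      have h3 : (⋃ e : ↥G.edgeSet, Blk e (iOf p) (p.1 % nS)).ncard ≤ 2 := by
        by_cases hne : (⋃ e : ↥G.edgeSet, Blk e (iOf p) (p.1 % nS)).Nonempty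
        · obtain ⟨x, hx⟩ := hne
          rw [Set.mem_iUnion] at hx
          obtain ⟨e0, hx0⟩ := hx
          rw [hBlkmem] at hx0
          have hsub : (⋃ e : ↥G.edgeSet, Blk e (iOf p) (p.1 % nS)) ⊆
              {ω e0 (pos e0 ((p.1 % nS - 1) % K)), ω e0 (pos e0 ((p.1 % nS - 1) % K + 1))} := by
            intro y hy
            rw [Set.mem_iUnion] at hy
            obtain ⟨e1, hy1⟩ := hy
            rw [hBlkmem] at hy1
            have hee : e1 = e0 := by
              apply en.injective
              apply Fin.ext
              rw [← hy1.1.2.1, ← hx0.1.2.1]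
            subst hee
            rcases hy1.2 with hh | hh <;> simp [hh]
          refine le_trans (Set.ncard_le_ncard hsub (Set.toFinite _)) ?_
          refine le_trans (Set.ncard_insert_le _ _) ?_
          simp [Set.ncard_singleton]
        · rw [Set.not_nonempty_iff_eq_empty] at hne
          rw [hne]
          simp
      omega
end

section
/- Every distension of a planar graph is planar. -/
open SimpleGraph

section DistensionAux

open SimpleGraph Function

variable {α β : Type} {G : SimpleGraph α} {G' : SimpleGraph β} {g : α ↪ β} {f : β → Sym2 α}

/-- Interior path vertex set of edge `e`. -/
private def PE (g : α ↪ β) (f : β → Sym2 α) (e : Sym2 α) : Set β :=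
  {w : β | w ∉ Set.range g ∧ f w = e}

private lemma walk_stay
    (h4 : ∀ w w' : β, w ∉ Set.range g → w' ∉ Set.range g → G'.Adj w w' → f w = f w')
    {C : Set β} (hCR : ∀ w ∈ C, w ∉ Set.range g) {e : Sym2 α} :
    ∀ {x y : ↥C}, (G'.induce C).Walk x y → (x : β) ∈ PE g f e → (y : β) ∈ PE g f e := by
  intro x y p
  induction p with
  | nil => exact id
  | @cons a b c h p ih =>
    intro hx
    have hadj : G'.Adj (a : β) (b : β) := h
    exact ih ⟨hCR _ b.2, (h4 _ _ hx.1 (hCR _ b.2) hadj).symm.trans hx.2⟩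

private lemma walk_exit
    (h3 : ∀ w : β, w ∉ Set.range g → ∀ v : α, (G'.Adj w (g v) ↔ v ∈ f w))
    (h4 : ∀ w w' : β, w ∉ Set.range g → w' ∉ Set.range g → G'.Adj w w' → f w = f w')
    {C : Set β} {e : Sym2 α} :
    ∀ {x y : ↥C}, (G'.induce C).Walk x y →
      (x : β) ∈ PE g f e → (y : β) ∉ PE g f e → ∃ v ∈ e, g v ∈ C := by
  intro x y p
  induction p with
  | nil => intro hx hy; exact absurd hx hy
  | @cons a b c h p ih =>
    intro hx hy
    by_cases hb : (b : β) ∈ PE g f e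
    · exact ih hb hy
    · have hadj : G'.Adj (a : β) (b : β) := h
      by_cases hbr : (b : β) ∈ Set.range g
      · obtain ⟨v, hv⟩ := hbr
        refine ⟨v, ?_, hv ▸ b.2⟩
        have := (h3 (a : β) hx.1 v).mp (hv ▸ hadj)
        rwa [hx.2] at this
      · exact absurd ⟨hbr, (h4 _ _ hx.1 hbr hadj).symm.trans hx.2⟩ hb

private lemma grounded_touch
    (h3 : ∀ w : β, w ∉ Set.range g → ∀ v : α, (G'.Adj w (g v) ↔ v ∈ f w))
    (h4 : ∀ w w' : β, w ∉ Set.range g → w' ∉ Set.range g → G'.Adj w w' → f w = f w')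
    {C : Set β} (hc : (G'.induce C).Connected) {e : Sym2 α} {x : β}
    (hx : x ∈ C) (hxe : x ∈ PE g f e) {u : α} (hu : g u ∈ C) :
    ∃ v ∈ e, g v ∈ C := by
  obtain ⟨p⟩ := hc.preconnected ⟨x, hx⟩ ⟨g u, hu⟩
  exact walk_exit h3 h4 p hxe (fun hpe => hpe.1 ⟨u, rfl⟩)

private lemma floating_sub
    (h4 : ∀ w w' : β, w ∉ Set.range g → w' ∉ Set.range g → G'.Adj w w' → f w = f w')
    {C : Set β} (hc : (G'.induce C).Connected) {e : Sym2 α} {x : β}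
    (hx : x ∈ C) (hxe : x ∈ PE g f e) (hCR : ∀ w ∈ C, w ∉ Set.range g) :
    ∀ y ∈ C, y ∈ PE g f e := by
  intro y hy
  obtain ⟨p⟩ := hc.preconnected ⟨x, hx⟩ ⟨y, hy⟩
  exact walk_stay h4 hCR p hxe

private lemma discrete_ivt {V : Type} {W : SimpleGraph V} (cc : V → ℕ)
    (hstep : ∀ a b : V, W.Adj a b → cc b = cc a + 1 ∨ cc a = cc b + 1) :
    ∀ {x y : V}, W.Walk x y → ∀ k : ℕ, min (cc x) (cc y) ≤ k → k ≤ max (cc x) (cc y) →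
      ∃ z : V, cc z = k := by
  intro x y p
  induction p with
  | @nil a => intro k h1 h2; exact ⟨a, by omega⟩
  | @cons a b c h p ih =>
    intro k h1 h2
    by_cases hk : cc a = k
    · exact ⟨a, hk⟩
    · rcases hstep a b h with hs | hs
      · exact ih k (by omega) (by omega)
      · exact ih k (by omega) (by omega)

/-- Boundary classification for a connected set inside the interior path of `e`. -/
private lemma bclass
    (h3 : ∀ w : β, w ∉ Set.range g → ∀ v : α, (G'.Adj w (g v) ↔ v ∈ f w))
    (h4 : ∀ w w' : β, w ∉ Set.range g → w' ∉ Set.range g → G'.Adj w w' → f w = f w')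
    {e : Sym2 α} {n : ℕ} (φ : (G'.induce (PE g f e)) ≃g SimpleGraph.pathGraph n)
    {C : Set β} (hC : ∀ w ∈ C, w ∈ PE g f e) (hconn : (G'.induce C).Connected) :
    ∃ m M : ℕ,
      (∃ z, ∃ hz : z ∈ C, (φ ⟨z, hC z hz⟩).val = m) ∧
      (∀ z, ∀ hz : z ∈ C, m ≤ (φ ⟨z, hC z hz⟩).val) ∧
      (∀ x y : β, x ∈ C → y ∉ C → G'.Adj x y →
        (∃ v ∈ e, y = g v) ∨
        (∃ hy : y ∈ PE g f e, (φ ⟨y, hy⟩).val + 1 = m ∨ (φ ⟨y, hy⟩).val = M + 1)) := by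
  classical
  have hne : ∃ z, z ∈ C := by
    obtain ⟨z⟩ := hconn.nonempty
    exact ⟨z.1, z.2⟩
  set S : Set ℕ := {k | ∃ z, ∃ hz : z ∈ C, (φ ⟨z, hC z hz⟩).val = k} with hS
  have hSne : S.Nonempty := by obtain ⟨z, hz⟩ := hne; exact ⟨_, z, hz, rfl⟩
  have hSbdd : BddAbove S := ⟨n, by rintro k ⟨z, hz, rfl⟩; exact le_of_lt (φ ⟨z, hC z hz⟩).isLt⟩
  have hmem_m : sInf S ∈ S := Nat.sInf_mem hSne
  have hmem_M : sSup S ∈ S := Nat.sSup_mem hSne hSbdd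
  have hlb : ∀ z (hz : z ∈ C), sInf S ≤ (φ ⟨z, hC z hz⟩).val := fun z hz => Nat.sInf_le ⟨z, hz, rfl⟩
  have hub : ∀ z (hz : z ∈ C), (φ ⟨z, hC z hz⟩).val ≤ sSup S := fun z hz => le_csSup hSbdd ⟨z, hz, rfl⟩
  -- coordinate step along edges inside PE e
  have hstep : ∀ (z z' : β) (hz : z ∈ PE g f e) (hz' : z' ∈ PE g f e), G'.Adj z z' →
      ((φ ⟨z', hz'⟩).val = (φ ⟨z, hz⟩).val + 1 ∨ (φ ⟨z, hz⟩).val = (φ ⟨z', hz'⟩).val + 1) := by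
    intro z z' hz hz' hzz
    have hia : (G'.induce (PE g f e)).Adj ⟨z, hz⟩ ⟨z', hz'⟩ := hzz
    have := SimpleGraph.pathGraph_adj.mp (φ.map_adj_iff.mpr hia)
    omega
  -- interval property
  have hint : ∀ k, sInf S ≤ k → k ≤ sSup S → ∃ z, ∃ hz : z ∈ C, (φ ⟨z, hC z hz⟩).val = k := by
    intro k hk1 hk2
    obtain ⟨zm, hzm, hzmv⟩ := hmem_m
    obtain ⟨zM, hzM, hzMv⟩ := hmem_M
    obtain ⟨p⟩ := hconn.preconnected ⟨zm, hzm⟩ ⟨zM, hzM⟩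
    have := discrete_ivt (W := G'.induce C) (fun z : ↥C => (φ ⟨z.1, hC z.1 z.2⟩).val)
      (fun a b hab => hstep a.1 b.1 (hC a.1 a.2) (hC b.1 b.2) hab) p k (by simp only; omega)
      (by simp only; omega)
    obtain ⟨z, hzv⟩ := this
    exact ⟨z.1, z.2, hzv⟩
  have hinj : ∀ (y y' : β) (hy : y ∈ PE g f e) (hy' : y' ∈ PE g f e),
      (φ ⟨y, hy⟩).val = (φ ⟨y', hy'⟩).val → y = y' := by
    intro y y' hy hy' hcc
    have h1 : φ ⟨y, hy⟩ = φ ⟨y', hy'⟩ := Fin.ext hcc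
    exact congrArg Subtype.val (φ.injective h1)
  refine ⟨sInf S, sSup S, hmem_m, hlb, ?_⟩
  intro x y hx hynot hadj
  by_cases hyr : y ∈ Set.range g
  · obtain ⟨v, rfl⟩ := hyr
    have := (h3 x (hC x hx).1 v).mp hadj
    rw [(hC x hx).2] at this
    exact Or.inl ⟨v, this, rfl⟩
  · have hype : y ∈ PE g f e :=
      ⟨hyr, (h4 x y (hC x hx).1 hyr hadj).symm.trans (hC x hx).2⟩
    refine Or.inr ⟨hype, ?_⟩
    have hdiff := hstep x y (hC x hx) hype hadj
    have hxm := hlb x hx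
    have hxM := hub x hx
    have hout : ¬ (sInf S ≤ (φ ⟨y, hype⟩).val ∧ (φ ⟨y, hype⟩).val ≤ sSup S) := by
      rintro ⟨hl, hr⟩
      obtain ⟨z, hz, hzv⟩ := hint _ hl hr
      exact hynot (hinj z y (hC z hz) hype hzv ▸ hz)
    omega

end DistensionAux
section DistensionAux2

open SimpleGraph Function

variable {α β : Type} {G : SimpleGraph α} {G' : SimpleGraph β} {g : α ↪ β} {f : β → Sym2 α}

private lemma reach_of_walk
    (h1 : ∀ u v : α, G'.Adj (g u) (g v) ↔ G.Adj u v)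
    (h2 : ∀ w : β, w ∉ Set.range g → f w ∈ G.edgeSet)
    (h3 : ∀ w : β, w ∉ Set.range g → ∀ v : α, (G'.Adj w (g v) ↔ v ∈ f w))
    (h4 : ∀ w w' : β, w ∉ Set.range g → w' ∉ Set.range g → G'.Adj w w' → f w = f w')
    {C : Set β} :
    ∀ {x y : ↥C}, (G'.induce C).Walk x y → ∀ (u v : α) (hu : g u ∈ C) (hv : g v ∈ C),
      (y : β) = g v → ((x : β) = g u ∨ ((x : β) ∉ Set.range g ∧ u ∈ f (x : β))) →
      (G.induce {a : α | g a ∈ C}).Reachable ⟨u, hu⟩ ⟨v, hv⟩ := by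
  intro x y p
  induction p with
  | nil =>
    intro u v hu hv hy hx
    rcases hx with hx | hx
    · have huv : u = v := g.injective (hx.symm.trans hy)
      subst huv
      rfl
    · exact absurd ⟨v, hy.symm⟩ hx.1
  | @cons a b c h p ih =>
    intro u v hu hv hy hx
    have hadj : G'.Adj (a : β) (b : β) := h
    rcases hx with hx | hx
    · by_cases hbr : (b : β) ∈ Set.range g
      · obtain ⟨w, hw⟩ := hbr
        have hwC : g w ∈ C := hw ▸ b.2
        have hGuw : G.Adj u w := (h1 u w).mp (by rw [hx, ← hw] at hadj; exact hadj)
        have hstanding : (G.induce {a : α | g a ∈ C}).Adj ⟨u, hu⟩ ⟨w, hwC⟩ := hGuw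
        exact hstanding.reachable.trans (ih w v hwC hv hy (Or.inl hw.symm))
      · have huf : u ∈ f (b : β) := (h3 (b : β) hbr u).mp (by rw [hx] at hadj; exact hadj.symm)
        exact ih u v hu hv hy (Or.inr ⟨hbr, huf⟩)
    · by_cases hbr : (b : β) ∈ Set.range g
      · obtain ⟨w, hw⟩ := hbr
        have hwC : g w ∈ C := hw ▸ b.2
        have hwf : w ∈ f (a : β) := (h3 (a : β) hx.1 w).mp (by rw [hw]; exact hadj)
        by_cases hwu : w = u
        · subst hwu
          exact ih w v hwC hv hy (Or.inl hw.symm)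
        · have hne : u ≠ w := fun hh => hwu hh.symm
          have hef : f (a : β) = s(u, w) := (Sym2.mem_and_mem_iff hne).mp ⟨hx.2, hwf⟩
          have hGuw : G.Adj u w := by
            have := h2 (a : β) hx.1
            rw [hef] at this
            exact this
          have hstanding : (G.induce {a : α | g a ∈ C}).Adj ⟨u, hu⟩ ⟨w, hwC⟩ := hGuw
          exact hstanding.reachable.trans (ih w v hwC hv hy (Or.inl hw.symm))
      · have hff : f (a : β) = f (b : β) := h4 _ _ hx.1 hbr hadj
        exact ih u v hu hv hy (Or.inr ⟨hbr, hff ▸ hx.2⟩)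

private lemma minor_of_grounded
    (h1 : ∀ u v : α, G'.Adj (g u) (g v) ↔ G.Adj u v)
    (h2 : ∀ w : β, w ∉ Set.range g → f w ∈ G.edgeSet)
    (h3 : ∀ w : β, w ∉ Set.range g → ∀ v : α, (G'.Adj w (g v) ↔ v ∈ f w))
    (h4 : ∀ w w' : β, w ∉ Set.range g → w' ∉ Set.range g → G'.Adj w w' → f w = f w')
    {ι : Type} {H : SimpleGraph ι} (C : ι → Set β)
    (hconn : ∀ i, (G'.induce (C i)).Connected)
    (hdisj : Pairwise fun i j => Disjoint (C i) (C j))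
    (hadjH : ∀ ⦃i j⦄, H.Adj i j → ∃ x ∈ C i, ∃ y ∈ C j, G'.Adj x y)
    (hgr : ∀ i, ∃ u, g u ∈ C i) :
    IsMinorOf H G := by
  classical
  refine ⟨fun i => {a : α | g a ∈ C i}, ?_, ?_, ?_⟩
  · intro i
    obtain ⟨u0, hu0⟩ := hgr i
    rw [SimpleGraph.connected_iff]
    refine ⟨?_, ⟨⟨u0, hu0⟩⟩⟩
    rintro ⟨u, hu⟩ ⟨v, hv⟩
    obtain ⟨p⟩ := (hconn i).preconnected ⟨g u, hu⟩ ⟨g v, hv⟩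
    exact reach_of_walk h1 h2 h3 h4 p u v hu hv rfl (Or.inl rfl)
  · intro i j hij
    rw [Set.disjoint_left]
    intro a ha ha'
    exact Set.disjoint_left.mp (hdisj hij) ha ha'
  · intro i j hij
    obtain ⟨x, hxi, y, hyj, hxy⟩ := hadjH hij
    have hne : i ≠ j := hij.ne
    by_cases hxr : x ∈ Set.range g <;> by_cases hyr : y ∈ Set.range g
    · obtain ⟨u, rfl⟩ := hxr
      obtain ⟨v, rfl⟩ := hyr
      exact ⟨u, hxi, v, hyj, (h1 u v).mp hxy⟩
    · obtain ⟨u, rfl⟩ := hxr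
      have huf : u ∈ f y := (h3 y hyr u).mp hxy.symm
      have hype : y ∈ PE g f (f y) := ⟨hyr, rfl⟩
      obtain ⟨u0, hu0⟩ := hgr j
      obtain ⟨w, hwmem, hwC⟩ := grounded_touch h3 h4 (hconn j) hyj hype hu0
      have hwu : u ≠ w := by
        rintro rfl
        exact Set.disjoint_left.mp (hdisj hne) hxi hwC
      have hef : f y = s(u, w) := (Sym2.mem_and_mem_iff hwu).mp ⟨huf, hwmem⟩
      have hGuw : G.Adj u w := by have := h2 y hyr; rw [hef] at this; exact this
      exact ⟨u, hxi, w, hwC, hGuw⟩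
    · obtain ⟨v, rfl⟩ := hyr
      have hvf : v ∈ f x := (h3 x hxr v).mp hxy
      have hxpe : x ∈ PE g f (f x) := ⟨hxr, rfl⟩
      obtain ⟨u0, hu0⟩ := hgr i
      obtain ⟨w, hwmem, hwC⟩ := grounded_touch h3 h4 (hconn i) hxi hxpe hu0
      have hwv : w ≠ v := by
        rintro rfl
        exact Set.disjoint_left.mp (hdisj hne) hwC hyj
      have hef : f x = s(w, v) := (Sym2.mem_and_mem_iff hwv).mp ⟨hwmem, hvf⟩
      have hGwv : G.Adj w v := by have := h2 x hxr; rw [hef] at this; exact this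
      exact ⟨w, hwC, v, hyj, hGwv⟩
    · have hff : f x = f y := h4 _ _ hxr hyr hxy
      have hxpe : x ∈ PE g f (f x) := ⟨hxr, rfl⟩
      have hype : y ∈ PE g f (f x) := ⟨hyr, hff.symm⟩
      obtain ⟨u0, hu0⟩ := hgr i
      obtain ⟨w1, hw1mem, hw1C⟩ := grounded_touch h3 h4 (hconn i) hxi hxpe hu0
      obtain ⟨v0, hv0⟩ := hgr j
      obtain ⟨w2, hw2mem, hw2C⟩ := grounded_touch h3 h4 (hconn j) hyj hype hv0
      have hw12 : w1 ≠ w2 := by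
        rintro rfl
        exact Set.disjoint_left.mp (hdisj hne) hw1C hw2C
      have hef : f x = s(w1, w2) := (Sym2.mem_and_mem_iff hw12).mp ⟨hw1mem, hw2mem⟩
      have hGw : G.Adj w1 w2 := by have := h2 x hxr; rw [hef] at this; exact this
      exact ⟨w1, hw1C, w2, hw2C, hGw⟩

end DistensionAux2
section DistensionAux3

open SimpleGraph Function

variable {α β : Type} {G : SimpleGraph α} {G' : SimpleGraph β} {g : α ↪ β} {f : β → Sym2 α}

/-- Stage 1: pick the floating branch set with minimal coordinate; classify its boundary. -/
private lemma stage1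
    (h3 : ∀ w : β, w ∉ Set.range g → ∀ v : α, (G'.Adj w (g v) ↔ v ∈ f w))
    (h4 : ∀ w w' : β, w ∉ Set.range g → w' ∉ Set.range g → G'.Adj w w' → f w = f w')
    {e : Sym2 α} {n : ℕ} (φ : (G'.induce (PE g f e)) ≃g SimpleGraph.pathGraph n)
    {u v : α} (heq : e = s(u, v))
    {ι : Type} (C : ι → Set β)
    (hconn : ∀ i, (G'.induce (C i)).Connected)
    (i0 : ι) (hfl0 : ∀ w ∈ C i0, w ∉ Set.range g)
    {x0 : β} (hx0 : x0 ∈ C i0) (hx0e : x0 ∈ PE g f e) :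
    ∃ (i1 : ι) (Y : Set β),
      (∀ w ∈ C i1, w ∉ Set.range g) ∧
      (∀ y ∈ Y, y ∈ PE g f e) ∧
      (∀ y ∈ Y, ∀ y' ∈ Y, y = y') ∧
      (∀ (j : ι) (x y : β), x ∈ C i1 → y ∈ C j → y ∉ C i1 → G'.Adj x y →
        ∃ w ∈ C j, w = g u ∨ w = g v ∨ w ∈ Y) := by
  classical
  set T : Set ℕ := {k | ∃ (j : ι) (z : β), (∀ w ∈ C j, w ∉ Set.range g) ∧
    ∃ hz : z ∈ PE g f e, z ∈ C j ∧ (φ ⟨z, hz⟩).val = k} with hT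
  have hTne : T.Nonempty := ⟨_, i0, x0, hfl0, hx0e, hx0, rfl⟩
  obtain ⟨i1, z1, hfl1, hz1e, hz1C, hz1v⟩ := Nat.sInf_mem hTne
  have hsub1 : ∀ w ∈ C i1, w ∈ PE g f e := floating_sub h4 (hconn i1) hz1C hz1e hfl1
  obtain ⟨m, M, ⟨zm, hzmC, hzmv⟩, hlow, hbd⟩ := bclass h3 h4 φ hsub1 (hconn i1)
  have hm_mem : m ∈ T := ⟨i1, zm, hfl1, hsub1 zm hzmC, hzmC, hzmv⟩
  have hm_le : sInf T ≤ m := Nat.sInf_le hm_mem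
  have hm_ge : m ≤ sInf T := by
    have := hlow z1 hz1C
    -- coordinates via hsub1 vs hz1e: proof irrelevance
    rw [← hz1v]
    convert this using 3
  have hm_eq : m = sInf T := le_antisymm hm_ge hm_le
  refine ⟨i1, {y : β | ∃ hy : y ∈ PE g f e, (φ ⟨y, hy⟩).val = M + 1}, hfl1, ?_, ?_, ?_⟩
  · rintro y ⟨hy, -⟩; exact hy
  · rintro y ⟨hy, hyv⟩ y' ⟨hy', hyv'⟩
    have : φ ⟨y, hy⟩ = φ ⟨y', hy'⟩ := Fin.ext (hyv.trans hyv'.symm)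
    exact congrArg Subtype.val (φ.injective this)
  · intro j x y hx hyj hynot hadj
    rcases hbd x y hx hynot hadj with ⟨w, hwe, rfl⟩ | ⟨hy, hcase⟩
    · rw [heq, Sym2.mem_iff] at hwe
      rcases hwe with h | h
      · exact ⟨g u, h ▸ hyj, Or.inl rfl⟩
      · exact ⟨g v, h ▸ hyj, Or.inr (Or.inl rfl)⟩
    · rcases hcase with hleft | hright
      · -- left boundary vertex: impossible to be floating, so C j is grounded
        by_cases hflj : ∀ w ∈ C j, w ∉ Set.range g
        · exfalso
          have : (φ ⟨y, hy⟩).val ∈ T := ⟨j, y, hflj, hy, hyj, rfl⟩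
          have := Nat.sInf_le this
          omega
        · push_neg at hflj
          obtain ⟨w0, hw0C, hw0r⟩ := hflj
          
          obtain ⟨b, hb⟩ := hw0r
          obtain ⟨w, hwe, hwC⟩ := grounded_touch h3 h4 (hconn j) hyj hy (hb ▸ hw0C)
          rw [heq, Sym2.mem_iff] at hwe
          rcases hwe with h | h
          · exact ⟨g u, h ▸ hwC, Or.inl rfl⟩
          · exact ⟨g v, h ▸ hwC, Or.inr (Or.inl rfl)⟩
      · exact ⟨y, hyj, Or.inr (Or.inr ⟨hy, hright⟩)⟩

end DistensionAux3
section DistensionAux4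

open SimpleGraph Function

variable {α β : Type} {G : SimpleGraph α} {G' : SimpleGraph β} {g : α ↪ β} {f : β → Sym2 α}

private lemma phi_inj {e : Sym2 α} {n : ℕ}
    (φ : (G'.induce (PE g f e)) ≃g SimpleGraph.pathGraph n)
    {y y' : β} (hy : y ∈ PE g f e) (hy' : y' ∈ PE g f e)
    (h : (φ ⟨y, hy⟩).val = (φ ⟨y', hy'⟩).val) : y = y' :=
  congrArg Subtype.val (φ.injective (Fin.ext h))

private lemma k5_floating_false
    (h2 : ∀ w : β, w ∉ Set.range g → f w ∈ G.edgeSet)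
    (h3 : ∀ w : β, w ∉ Set.range g → ∀ v : α, (G'.Adj w (g v) ↔ v ∈ f w))
    (h4 : ∀ w w' : β, w ∉ Set.range g → w' ∉ Set.range g → G'.Adj w w' → f w = f w')
    (h5 : ∀ e ∈ G.edgeSet, {w : β | w ∉ Set.range g ∧ f w = e}.Nonempty ∧
      IsPathGraph (G'.induce {w : β | w ∉ Set.range g ∧ f w = e}))
    (C : Fin 5 → Set β)
    (hconn : ∀ i, (G'.induce (C i)).Connected)
    (hdisj : Pairwise fun i j => Disjoint (C i) (C j))
    (hadjH : ∀ ⦃i j⦄, (completeGraph (Fin 5)).Adj i j → ∃ x ∈ C i, ∃ y ∈ C j, G'.Adj x y)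
    (i0 : Fin 5) (hfl0 : ∀ w ∈ C i0, w ∉ Set.range g) : False := by
  classical
  obtain ⟨x0s⟩ := (hconn i0).nonempty
  obtain ⟨x0, hx0⟩ : ∃ x0, x0 ∈ C i0 := ⟨x0s.1, x0s.2⟩
  have hx0r := hfl0 x0 hx0
  have he : f x0 ∈ G.edgeSet := h2 x0 hx0r
  obtain ⟨u, v, heq⟩ : ∃ u v, f x0 = s(u, v) :=
    Sym2.inductionOn (f x0) fun a b => ⟨a, b, rfl⟩
  obtain ⟨n, ⟨φ⟩⟩ := (h5 _ he).2
  have hx0e : x0 ∈ PE g f (f x0) := ⟨hx0r, rfl⟩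
  obtain ⟨i1, Y, hfl1, hYP, hYsub, hclass⟩ :=
    stage1 h3 h4 φ heq C hconn i0 hfl0 hx0 hx0e
  have hwit : ∀ j : Fin 5, ∃ (w : β) (t : Fin 3), j ≠ i1 →
      w ∈ C j ∧ ((t = 0 ∧ w = g u) ∨ (t = 1 ∧ w = g v) ∨ (t = 2 ∧ w ∈ Y)) := by
    intro j
    by_cases hj : j = i1
    · exact ⟨x0, 0, fun h => absurd hj h⟩
    · obtain ⟨x, hx, y, hy, hxy⟩ := hadjH (show (completeGraph (Fin 5)).Adj i1 j from Ne.symm hj)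
      have hynot : y ∉ C i1 := fun hyC =>
        Set.disjoint_left.mp (hdisj (show j ≠ i1 from hj)) hy hyC
      obtain ⟨w, hwC, hwcase⟩ := hclass j x y hx hy hynot hxy
      rcases hwcase with h | h | h
      · exact ⟨w, 0, fun _ => ⟨hwC, Or.inl ⟨rfl, h⟩⟩⟩
      · exact ⟨w, 1, fun _ => ⟨hwC, Or.inr (Or.inl ⟨rfl, h⟩)⟩⟩
      · exact ⟨w, 2, fun _ => ⟨hwC, Or.inr (Or.inr ⟨rfl, h⟩)⟩⟩
  choose w t hwt using hwit
  have hcard : (Finset.univ : Finset (Fin 3)).card <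
      ((Finset.univ : Finset (Fin 5)).erase i1).card := by
    simp [Finset.card_erase_of_mem]
  obtain ⟨j, hj, j', hj', hne, hteq⟩ :=
    Finset.exists_ne_map_eq_of_card_lt_of_maps_to hcard (fun a _ => Finset.mem_univ (t a))
  have hjne : j ≠ i1 := Finset.ne_of_mem_erase hj
  have hjne' : j' ≠ i1 := Finset.ne_of_mem_erase hj'
  obtain ⟨hwC, hcase⟩ := hwt j hjne
  obtain ⟨hwC', hcase'⟩ := hwt j' hjne'
  have hww : w j = w j' := by
    rcases hcase with ⟨ht, h⟩ | ⟨ht, h⟩ | ⟨ht, h⟩ <;>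
      rcases hcase' with ⟨ht', h'⟩ | ⟨ht', h'⟩ | ⟨ht', h'⟩ <;>
      first
        | (exact h.trans h'.symm)
        | (exact hYsub _ h _ h')
        | (exfalso; rw [ht, ht'] at hteq; exact absurd hteq (by decide))
  exact Set.disjoint_left.mp (hdisj hne) (hww ▸ hwC) hwC'

private lemma k33_side
    (h3 : ∀ w : β, w ∉ Set.range g → ∀ v : α, (G'.Adj w (g v) ↔ v ∈ f w))
    (h4 : ∀ w w' : β, w ∉ Set.range g → w' ∉ Set.range g → G'.Adj w w' → f w = f w')
    {e : Sym2 α} {n : ℕ} (φ : (G'.induce (PE g f e)) ≃g SimpleGraph.pathGraph n)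
    {u v : α} (heq : e = s(u, v))
    {ι : Type} (C : ι → Set β)
    (hconn : ∀ i, (G'.induce (C i)).Connected)
    (hdisj : Pairwise fun i j => Disjoint (C i) (C j))
    {i1 : ι} {Y : Set β}
    (hYP : ∀ y ∈ Y, y ∈ PE g f e)
    (hYsub : ∀ y ∈ Y, ∀ y' ∈ Y, y = y')
    (hclass : ∀ (j : ι) (x y : β), x ∈ C i1 → y ∈ C j → y ∉ C i1 → G'.Adj x y →
        ∃ w ∈ C j, w = g u ∨ w = g v ∨ w ∈ Y)
    (A B : Fin 3 → ι)
    (hAinj : Function.Injective A) (hBinj : Function.Injective B)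
    (hABne : ∀ k l, A k ≠ B l) (hBi1 : ∀ k, B k ≠ i1)
    (hadj1 : ∀ k : Fin 3, ∃ x ∈ C i1, ∃ y ∈ C (B k), G'.Adj x y)
    (hadj2 : ∀ k l : Fin 3, ∃ x ∈ C (B k), ∃ y ∈ C (A l), G'.Adj x y) :
    False := by
  classical
  -- stage-1 tags for the three B-neighbours of i1
  have hwit : ∀ k : Fin 3, ∃ (w : β) (t : Fin 3),
      w ∈ C (B k) ∧ ((t = 0 ∧ w = g u) ∨ (t = 1 ∧ w = g v) ∨ (t = 2 ∧ w ∈ Y)) := by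
    intro k
    obtain ⟨x, hx, y, hy, hxy⟩ := hadj1 k
    have hynot : y ∉ C i1 := fun hyC =>
      Set.disjoint_left.mp (hdisj (hBi1 k)) hy hyC
    obtain ⟨w, hwC, hwcase⟩ := hclass (B k) x y hx hy hynot hxy
    rcases hwcase with h | h | h
    · exact ⟨w, 0, hwC, Or.inl ⟨rfl, h⟩⟩
    · exact ⟨w, 1, hwC, Or.inr (Or.inl ⟨rfl, h⟩)⟩
    · exact ⟨w, 2, hwC, Or.inr (Or.inr ⟨rfl, h⟩)⟩
  choose w t hwC hwt using hwit
  by_cases hcol : ∃ k k', k ≠ k' ∧ t k = t k'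
  · obtain ⟨k, k', hkk, hteq⟩ := hcol
    have hww : w k = w k' := by
      rcases hwt k with ⟨ht, h⟩ | ⟨ht, h⟩ | ⟨ht, h⟩ <;>
        rcases hwt k' with ⟨ht', h'⟩ | ⟨ht', h'⟩ | ⟨ht', h'⟩ <;>
        first
          | (exact h.trans h'.symm)
          | (exact hYsub _ h _ h')
          | (exfalso; rw [ht, ht'] at hteq; exact absurd hteq (by decide))
    exact Set.disjoint_left.mp (hdisj (fun hh => hkk (hBinj hh))) (hww ▸ hwC k) (hwC k')
  · push_neg at hcol
    have htinj : Function.Injective t := by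
      intro k k' hkk
      by_contra hne
      exact hcol k k' hne hkk
    have htsurj : Function.Surjective t := Finite.surjective_of_injective htinj
    obtain ⟨k0, hk0⟩ := htsurj 0
    obtain ⟨k1, hk1⟩ := htsurj 1
    obtain ⟨kd, hkd⟩ := htsurj 2
    have hgu : g u ∈ C (B k0) := by
      rcases hwt k0 with ⟨ht, h⟩ | ⟨ht, h⟩ | ⟨ht, h⟩
      · exact h ▸ hwC k0
      · rw [hk0] at ht; exact absurd ht (by decide)
      · rw [hk0] at ht; exact absurd ht (by decide)
    have hgv : g v ∈ C (B k1) := by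
      rcases hwt k1 with ⟨ht, h⟩ | ⟨ht, h⟩ | ⟨ht, h⟩
      · rw [hk1] at ht; exact absurd ht (by decide)
      · exact h ▸ hwC k1
      · rw [hk1] at ht; exact absurd ht (by decide)
    have hwdY : w kd ∈ Y := by
      rcases hwt kd with ⟨ht, h⟩ | ⟨ht, h⟩ | ⟨ht, h⟩
      · rw [hkd] at ht; exact absurd ht (by decide)
      · rw [hkd] at ht; exact absurd ht (by decide)
      · exact h
    have hwdC : w kd ∈ C (B kd) := hwC kd
    have hwdPE : w kd ∈ PE g f e := hYP _ hwdY
    have hk0kd : k0 ≠ kd := by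
      intro hh; rw [hh, hkd] at hk0; exact absurd hk0 (by decide)
    have hk1kd : k1 ≠ kd := by
      intro hh; rw [hh, hkd] at hk1; exact absurd hk1 (by decide)
    by_cases hfld : ∀ w' ∈ C (B kd), w' ∉ Set.range g
    · -- C (B kd) is floating inside the path of e : apply bclass
      have hsubd : ∀ w' ∈ C (B kd), w' ∈ PE g f e :=
        floating_sub h4 (hconn _) hwdC hwdPE hfld
      obtain ⟨m', M', -, -, hbd'⟩ := bclass h3 h4 φ hsubd (hconn _)
      have hwit2 : ∀ l : Fin 3, ∃ (y : β) (s : Fin 2), y ∈ C (A l) ∧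
          ((s = 0 ∧ ∃ hy : y ∈ PE g f e, (φ ⟨y, hy⟩).val + 1 = m') ∨
           (s = 1 ∧ ∃ hy : y ∈ PE g f e, (φ ⟨y, hy⟩).val = M' + 1)) := by
        intro l
        obtain ⟨x, hx, y, hy, hxy⟩ := hadj2 kd l
        have hynot : y ∉ C (B kd) := fun hyC =>
          Set.disjoint_left.mp (hdisj (hABne l kd).symm) hyC hy
        rcases hbd' x y hx hynot hxy with ⟨w', hw'e, rfl⟩ | ⟨hy', hcase⟩
        · exfalso
          rw [heq, Sym2.mem_iff] at hw'e
          rcases hw'e with rfl | rfl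
          · exact Set.disjoint_left.mp
              (hdisj (hABne l k0)) hy hgu
          · exact Set.disjoint_left.mp
              (hdisj (hABne l k1)) hy hgv
        · rcases hcase with h | h
          · exact ⟨y, 0, hy, Or.inl ⟨rfl, hy', h⟩⟩
          · exact ⟨y, 1, hy, Or.inr ⟨rfl, hy', h⟩⟩
      choose y s hyC hys using hwit2
      have hcard2 : Fintype.card (Fin 2) < Fintype.card (Fin 3) := by decide
      obtain ⟨l, l', hll, hseq⟩ := Fintype.exists_ne_map_eq_of_card_lt s hcard2
      have hyy : y l = y l' := by
        rcases hys l with ⟨hs, hy1, hc⟩ | ⟨hs, hy1, hc⟩ <;>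
          rcases hys l' with ⟨hs', hy1', hc'⟩ | ⟨hs', hy1', hc'⟩
        · exact phi_inj φ hy1 hy1' (by omega)
        · exfalso; rw [hs, hs'] at hseq; exact absurd hseq (by decide)
        · exfalso; rw [hs, hs'] at hseq; exact absurd hseq (by decide)
        · exact phi_inj φ hy1 hy1' (by omega)
      exact Set.disjoint_left.mp (hdisj (fun hh => hll (hAinj hh))) (hyy ▸ hyC l) (hyC l')
    · -- C (B kd) is grounded : it must contain g u or g v, contradiction
      push_neg at hfld
      obtain ⟨w0, hw0C, hw0r⟩ := hfld
      obtain ⟨b, hb⟩ := hw0r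
      obtain ⟨v', hv'e, hv'C⟩ := grounded_touch h3 h4 (hconn _) hwdC hwdPE (hb ▸ hw0C)
      rw [heq, Sym2.mem_iff] at hv'e
      rcases hv'e with h | h
      · exact Set.disjoint_left.mp
          (hdisj (show B k0 ≠ B kd from fun hh => hk0kd (hBinj hh))) hgu (h ▸ hv'C)
      · exact Set.disjoint_left.mp
          (hdisj (show B k1 ≠ B kd from fun hh => hk1kd (hBinj hh))) hgv (h ▸ hv'C)

private lemma k33_floating_false
    (h2 : ∀ w : β, w ∉ Set.range g → f w ∈ G.edgeSet)
    (h3 : ∀ w : β, w ∉ Set.range g → ∀ v : α, (G'.Adj w (g v) ↔ v ∈ f w))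
    (h4 : ∀ w w' : β, w ∉ Set.range g → w' ∉ Set.range g → G'.Adj w w' → f w = f w')
    (h5 : ∀ e ∈ G.edgeSet, {w : β | w ∉ Set.range g ∧ f w = e}.Nonempty ∧
      IsPathGraph (G'.induce {w : β | w ∉ Set.range g ∧ f w = e}))
    (C : Fin 3 ⊕ Fin 3 → Set β)
    (hconn : ∀ i, (G'.induce (C i)).Connected)
    (hdisj : Pairwise fun i j => Disjoint (C i) (C j))
    (hadjH : ∀ ⦃i j⦄, (completeBipartiteGraph (Fin 3) (Fin 3)).Adj i j →
      ∃ x ∈ C i, ∃ y ∈ C j, G'.Adj x y)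
    (i0 : Fin 3 ⊕ Fin 3) (hfl0 : ∀ w ∈ C i0, w ∉ Set.range g) : False := by
  classical
  obtain ⟨x0s⟩ := (hconn i0).nonempty
  obtain ⟨x0, hx0⟩ : ∃ x0, x0 ∈ C i0 := ⟨x0s.1, x0s.2⟩
  have hx0r := hfl0 x0 hx0
  have he : f x0 ∈ G.edgeSet := h2 x0 hx0r
  obtain ⟨u, v, heq⟩ : ∃ u v, f x0 = s(u, v) :=
    Sym2.inductionOn (f x0) fun a b => ⟨a, b, rfl⟩
  obtain ⟨n, ⟨φ⟩⟩ := (h5 _ he).2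
  have hx0e : x0 ∈ PE g f (f x0) := ⟨hx0r, rfl⟩
  obtain ⟨i1, Y, hfl1, hYP, hYsub, hclass⟩ :=
    stage1 h3 h4 φ heq C hconn i0 hfl0 hx0 hx0e
  have hadjLR : ∀ a b : Fin 3,
      (completeBipartiteGraph (Fin 3) (Fin 3)).Adj (Sum.inl a) (Sum.inr b) := by
    intro a b; simp
  have hadjRL : ∀ a b : Fin 3,
      (completeBipartiteGraph (Fin 3) (Fin 3)).Adj (Sum.inr a) (Sum.inl b) := by
    intro a b; simp
  rcases i1 with a | a
  · exact k33_side h3 h4 φ heq C hconn hdisj hYP hYsub hclass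
      Sum.inl Sum.inr Sum.inl_injective Sum.inr_injective
      (fun k l => Sum.inl_ne_inr) (fun k => Sum.inr_ne_inl)
      (fun k => hadjH (hadjLR a k))
      (fun k l => hadjH (hadjRL k l))
  · exact k33_side h3 h4 φ heq C hconn hdisj hYP hYsub hclass
      Sum.inr Sum.inl Sum.inr_injective Sum.inl_injective
      (fun k l => Sum.inr_ne_inl) (fun k => Sum.inl_ne_inr)
      (fun k => hadjH (hadjRL a k))
      (fun k l => hadjH (hadjLR k l))

end DistensionAux4
/-- Every distension of a planar graph is planar. -/
theorem stmt16 {α β : Type} [Fintype α] [Fintype β]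
    (G : SimpleGraph α) (G' : SimpleGraph β) (h : IsDistension G G')
    (hG : IsPlanar G) : IsPlanar G' := by
  classical
  obtain ⟨g, f, h1, h2, h3, h4, h5⟩ := h
  constructor
  · rintro ⟨C, hconn, hdisj, hadjH⟩
    by_cases hgr : ∀ i, ∃ u, g u ∈ C i
    · exact hG.1 (minor_of_grounded h1 h2 h3 h4 C hconn hdisj hadjH hgr)
    · push_neg at hgr
      obtain ⟨i0, hi0⟩ := hgr
      have hfl0 : ∀ w ∈ C i0, w ∉ Set.range g := by
        rintro w hw ⟨a, rfl⟩
        exact hi0 a hw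
      exact k5_floating_false h2 h3 h4 h5 C hconn hdisj hadjH i0 hfl0
  · rintro ⟨C, hconn, hdisj, hadjH⟩
    by_cases hgr : ∀ i, ∃ u, g u ∈ C i
    · exact hG.2 (minor_of_grounded h1 h2 h3 h4 C hconn hdisj hadjH hgr)
    · push_neg at hgr
      obtain ⟨i0, hi0⟩ := hgr
      have hfl0 : ∀ w ∈ C i0, w ∉ Set.range g := by
        rintro w hw ⟨a, rfl⟩
        exact hi0 a hw
      exact k33_floating_false h2 h3 h4 h5 C hconn hdisj hadjH i0 hfl0
end
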